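/- Splitting lemma for S: if a sequent Π_{Γ,Δ} ⊢ A (where Π_{Γ,Δ} is some permutation of the concatenation of Γ and Δ) is derivable in the system S, and Δ is prime to the sequence Γ,A, then both Δ ⊢ I and Γ ⊢ A are derivable in S. -/
import Mathlib


/-- Formulae of the system `S`: built from propositional letters and the constant `I`
(`unit`) with the binary connectives `⊗` (`tens`) and `→` (`imp`). -/
inductive Fml : Type
  | atom : ℕ → Fml
  | unit : Fml
  | tens : Fml → Fml → Fml
  | imp : Fml → Fml → Fml

/-- Derivability in the system `S`.  Sequents are `Γ ⊢ A` with `Γ` a finite list of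
formulae.  Axioms: `A ⊢ A` and `⊢ I`; structural rules: weakening, interchange and cut;
operational rules: `⊗⊢`, `⊢⊗`, `→⊢` and `⊢→`. -/
inductive SDeriv : List Fml → Fml → Prop
  | ax (A : Fml) : SDeriv [A] A
  | axI : SDeriv [] Fml.unit
  | weak {Γ A} : SDeriv Γ A → SDeriv (Fml.unit :: Γ) A
  | exch {Γ Δ : List Fml} {A B C} :
      SDeriv (Γ ++ A :: B :: Δ) C → SDeriv (Γ ++ B :: A :: Δ) C
  | cut {Γ Δ Θ : List Fml} {A B} :
      SDeriv Γ A → SDeriv (Δ ++ A :: Θ) B → SDeriv (Δ ++ Γ ++ Θ) B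
  | tensL {Γ Δ : List Fml} {A B C} :
      SDeriv (Γ ++ A :: B :: Δ) C → SDeriv (Γ ++ (A.tens B) :: Δ) C
  | tensR {Γ Δ : List Fml} {A B} :
      SDeriv Γ A → SDeriv Δ B → SDeriv (Γ ++ Δ) (A.tens B)
  | impL {Γ Δ : List Fml} {A B C} :
      SDeriv Γ A → SDeriv (B :: Δ) C → SDeriv (Γ ++ (A.imp B) :: Δ) C
  | impR {Γ : List Fml} {A B} :
      SDeriv (A :: Γ) B → SDeriv Γ (A.imp B)

/-- The propositional letter `p` occurs in the given formula. -/
def Fml.occurs (p : ℕ) : Fml → Prop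
  | .atom q => q = p
  | .unit => False
  | .tens A B => A.occurs p ∨ B.occurs p
  | .imp A B => A.occurs p ∨ B.occurs p

/-- `Γ` is prime to `Δ` when no propositional letter occurs both in a formula of `Γ`
and in a formula of `Δ`. -/
def PrimeTo (Γ Δ : List Fml) : Prop :=
  ∀ (p : ℕ), ∀ X ∈ Γ, ∀ Y ∈ Δ, X.occurs p → ¬Y.occurs p


namespace Fml

/-- Substitution of formulae for propositional letters. -/
def subst (s : ℕ → Fml) : Fml → Fml
  | atom q => s q
  | unit => unit
  | tens A B => tens (A.subst s) (B.subst s)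
  | imp A B => imp (A.subst s) (B.subst s)

/-- The list of atoms occurring in a formula. -/
def atoms : Fml → List ℕ
  | atom q => [q]
  | unit => []
  | tens A B => A.atoms ++ B.atoms
  | imp A B => A.atoms ++ B.atoms

theorem occurs_iff_mem_atoms (p : ℕ) : ∀ F : Fml, F.occurs p ↔ p ∈ F.atoms := by
  intro F
  induction F with
  | atom q => simp [occurs, atoms, eq_comm]
  | unit => simp [occurs, atoms]
  | tens A B ihA ihB => simp [occurs, atoms, ihA, ihB]
  | imp A B ihA ihB => simp [occurs, atoms, ihA, ihB]

theorem subst_fix {s : ℕ → Fml} : ∀ {F : Fml},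
    (∀ p, F.occurs p → s p = Fml.atom p) → F.subst s = F := by
  intro F
  induction F with
  | atom q => intro h; exact h q rfl
  | unit => intro _; rfl
  | tens A B ihA ihB =>
      intro h
      simp [subst, ihA (fun p hp => h p (Or.inl hp)), ihB (fun p hp => h p (Or.inr hp))]
  | imp A B ihA ihB =>
      intro h
      simp [subst, ihA (fun p hp => h p (Or.inl hp)), ihB (fun p hp => h p (Or.inr hp))]

theorem subst_unit_only {s : ℕ → Fml} : ∀ {F : Fml},
    (∀ p, F.occurs p → s p = Fml.unit) → ∀ q, ¬ (F.subst s).occurs q := by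
  intro F
  induction F with
  | atom q => intro h q'; rw [show subst s (atom q) = s q from rfl, h q rfl]; exact id
  | unit => intro _ q'; exact id
  | tens A B ihA ihB =>
      intro h q' hq
      rcases hq with hq | hq
      · exact ihA (fun p hp => h p (Or.inl hp)) q' hq
      · exact ihB (fun p hp => h p (Or.inr hp)) q' hq
  | imp A B ihA ihB =>
      intro h q' hq
      rcases hq with hq | hq
      · exact ihA (fun p hp => h p (Or.inl hp)) q' hq
      · exact ihB (fun p hp => h p (Or.inr hp)) q' hq

end Fml

theorem SDeriv.substitution {Γ : List Fml} {A : Fml} (s : ℕ → Fml)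
    (h : SDeriv Γ A) : SDeriv (Γ.map (Fml.subst s)) (A.subst s) := by
  induction h with
  | ax A => exact .ax _
  | axI => exact .axI
  | weak _ ih => exact .weak ih
  | @exch Γ Δ A B C _ ih =>
      have := SDeriv.exch (Γ := Γ.map (Fml.subst s)) (Δ := Δ.map (Fml.subst s))
        (A := A.subst s) (B := B.subst s) (by simpa using ih)
      simpa using this
  | @cut Γ Δ Θ A B _ _ ih1 ih2 =>
      have := SDeriv.cut ih1 (Δ := Δ.map (Fml.subst s)) (Θ := Θ.map (Fml.subst s))
        (by simpa using ih2)
      simpa using this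
  | @tensL Γ Δ A B C _ ih =>
      have := SDeriv.tensL (Γ := Γ.map (Fml.subst s)) (Δ := Δ.map (Fml.subst s))
        (A := A.subst s) (B := B.subst s) (by simpa using ih)
      simpa [Fml.subst] using this
  | tensR _ _ ih1 ih2 =>
      have := SDeriv.tensR ih1 ih2
      simpa [Fml.subst] using this
  | @impL Γ Δ A B C _ _ ih1 ih2 =>
      have := SDeriv.impL ih1 (Δ := Δ.map (Fml.subst s)) (by simpa using ih2)
      simpa [Fml.subst] using this
  | impR _ ih => exact .impR (by simpa using ih)

theorem SDeriv.perm_aux {l l' : List Fml} (p : l.Perm l') :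
    ∀ Γ A, SDeriv (Γ ++ l) A → SDeriv (Γ ++ l') A := by
  induction p with
  | nil => intro Γ A h; exact h
  | cons x _ ih =>
      intro Γ A h
      have := ih (Γ ++ [x]) A (by simpa using h)
      simpa using this
  | swap x y l =>
      intro Γ A h
      exact SDeriv.exch h
  | trans _ _ ih1 ih2 =>
      intro Γ A h
      exact ih2 Γ A (ih1 Γ A h)

theorem SDeriv.perm {Γ Γ' : List Fml} {A : Fml} (h : SDeriv Γ A)
    (p : Γ.Perm Γ') : SDeriv Γ' A :=
  SDeriv.perm_aux p [] A h

theorem unit_only_derivable {F : Fml} (h : ∀ p, ¬ F.occurs p) :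
    SDeriv [] F ∧ SDeriv [F] Fml.unit := by
  induction F with
  | atom q => exact absurd rfl (h q)
  | unit => exact ⟨.axI, .ax _⟩
  | tens A B ihA ihB =>
      obtain ⟨a1, a2⟩ := ihA (fun p hp => h p (Or.inl hp))
      obtain ⟨b1, b2⟩ := ihB (fun p hp => h p (Or.inr hp))
      constructor
      · simpa using SDeriv.tensR a1 b1
      · have h1 : SDeriv [A, Fml.unit] Fml.unit :=
          SDeriv.exch (Γ := []) (Δ := []) (SDeriv.weak a2)
        have h2 : SDeriv [A, B] Fml.unit := by
          have := SDeriv.cut (Δ := [A]) (Θ := []) b2 h1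
          simpa using this
        exact SDeriv.tensL (Γ := []) (Δ := []) h2
  | imp A B ihA ihB =>
      obtain ⟨a1, a2⟩ := ihA (fun p hp => h p (Or.inl hp))
      obtain ⟨b1, b2⟩ := ihB (fun p hp => h p (Or.inr hp))
      constructor
      · have h1 : SDeriv [A] B := by
          have := SDeriv.cut (Δ := []) (Θ := []) a2 (SDeriv.weak b1)
          simpa using this
        exact SDeriv.impR h1
      · exact SDeriv.impL (Γ := []) (Δ := []) a1 b2

theorem remove_provable : ∀ (Ξ : List Fml) {Θ : List Fml} {B : Fml},
    (∀ X ∈ Ξ, SDeriv [] X) → SDeriv (Ξ ++ Θ) B → SDeriv Θ B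
  | [], _, _ => fun _ h => h
  | X :: Ξ, Θ, B => fun hX h => by
      have h' : SDeriv ([] ++ X :: (Ξ ++ Θ)) B := h
      have := SDeriv.cut (Δ := []) (Θ := Ξ ++ Θ) (hX X (by simp)) h'
      exact remove_provable Ξ (fun Y hY => hX Y (by simp [hY])) (by simpa using this)

theorem map_fix {f : Fml → Fml} : ∀ {L : List Fml}, (∀ X ∈ L, f X = X) → L.map f = L := by
  intro L
  induction L with
  | nil => intro _; rfl
  | cons x l ih =>
      intro h
      simp [h x (by simp), ih (fun y hy => h y (by simp [hy]))]

/-- Splitting lemma for `S`: if some permutation of `Γ, Δ` derives `A` and `Δ` is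
prime to `Γ, A`, then `Δ ⊢ I` and `Γ ⊢ A` are derivable in `S`. -/
theorem splitting (Γ Δ Φ : List Fml) (A : Fml)
    (hperm : Φ.Perm (Γ ++ Δ)) (h : SDeriv Φ A)
    (hprime : PrimeTo Δ (Γ ++ [A])) :
    SDeriv Δ Fml.unit ∧ SDeriv Γ A := by
  classical
  -- substitution sending atoms of Δ to unit
  set s1 : ℕ → Fml := fun p => if p ∈ Δ.flatMap Fml.atoms then Fml.unit else Fml.atom p with hs1
  -- substitution sending atoms of Γ ++ [A] to unit
  set s2 : ℕ → Fml := fun p => if p ∈ (Γ ++ [A]).flatMap Fml.atoms then Fml.unit else Fml.atom p with hs2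
  have hs1fix : ∀ X ∈ Γ ++ [A], Fml.subst s1 X = X := by
    intro X hX
    apply Fml.subst_fix
    intro p hp
    simp only [hs1, ite_eq_right_iff]
    intro hmem
    exfalso
    rw [List.mem_flatMap] at hmem
    obtain ⟨Y, hY, hpY⟩ := hmem
    exact hprime p Y hY X hX ((Fml.occurs_iff_mem_atoms p Y).2 hpY) hp
  have hs1unit : ∀ D ∈ Δ, ∀ q, ¬ (Fml.subst s1 D).occurs q := by
    intro D hD
    apply Fml.subst_unit_only
    intro p hp
    simp only [hs1, ite_eq_left_iff]
    intro hmem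
    exfalso
    exact hmem (List.mem_flatMap.2 ⟨D, hD, (Fml.occurs_iff_mem_atoms p D).1 hp⟩)
  have hs2fix : ∀ D ∈ Δ, Fml.subst s2 D = D := by
    intro D hD
    apply Fml.subst_fix
    intro p hp
    simp only [hs2, ite_eq_right_iff]
    intro hmem
    exfalso
    rw [List.mem_flatMap] at hmem
    obtain ⟨Y, hY, hpY⟩ := hmem
    exact hprime p D hD Y hY hp ((Fml.occurs_iff_mem_atoms p Y).2 hpY)
  have hs2unit : ∀ X ∈ Γ ++ [A], ∀ q, ¬ (Fml.subst s2 X).occurs q := by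
    intro X hX
    apply Fml.subst_unit_only
    intro p hp
    simp only [hs2, ite_eq_left_iff]
    intro hmem
    exfalso
    exact hmem (List.mem_flatMap.2 ⟨X, hX, (Fml.occurs_iff_mem_atoms p X).1 hp⟩)
  constructor
  · -- Δ ⊢ I
    have h2 := h.substitution s2
    have hperm2 : (Φ.map (Fml.subst s2)).Perm (Γ.map (Fml.subst s2) ++ Δ) := by
      have := hperm.map (Fml.subst s2)
      rw [List.map_append, map_fix hs2fix] at this
      exact this
    have hd : SDeriv (Γ.map (Fml.subst s2) ++ Δ) (Fml.subst s2 A) := h2.perm hperm2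
    have hd' : SDeriv Δ (Fml.subst s2 A) := by
      refine remove_provable _ ?_ hd
      intro X hX
      rw [List.mem_map] at hX
      obtain ⟨G, hG, rfl⟩ := hX
      exact (unit_only_derivable (hs2unit G (by simp [hG]))).1
    have hAI : SDeriv [Fml.subst s2 A] Fml.unit :=
      (unit_only_derivable (hs2unit A (by simp))).2
    have := SDeriv.cut (Δ := []) (Θ := []) hd' hAI
    simpa using this
  · -- Γ ⊢ A
    have h1 := h.substitution s1
    rw [hs1fix A (by simp)] at h1
    have hperm1 : (Φ.map (Fml.subst s1)).Perm (Δ.map (Fml.subst s1) ++ Γ) := by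
      have := hperm.map (Fml.subst s1)
      rw [List.map_append] at this
      have hΓ : Γ.map (Fml.subst s1) = Γ := map_fix (fun X hX => hs1fix X (by simp [hX]))
      rw [hΓ] at this
      exact this.trans List.perm_append_comm
    have hd : SDeriv (Δ.map (Fml.subst s1) ++ Γ) A := h1.perm hperm1
    refine remove_provable _ ?_ hd
    intro X hX
    rw [List.mem_map] at hX
    obtain ⟨D, hD, rfl⟩ := hX
    exact (unit_only_derivable (hs1unit D hD)).1
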